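/- Let g : ℝ → ℝ be continuously differentiable and 1-periodic, and assume that g′(t) ≠ 0 whenever g(t) = 0. Then g has only finitely many zeros in [0,1), and the function t ↦ log|g(t)| is Lebesgue-integrable on [0,1], i.e. ∫₀¹ |log|g(t)|| dt < ∞. -/

import Mathlib

open MeasureTheory Topology Filter

/-- `|log u| ≤ u + 2 u^{-1/2}` for `u > 0`. -/
lemma log_abs_le_aux {u : ℝ} (hu : 0 < u) :
    |Real.log u| ≤ u + 2 * u ^ (-(1:ℝ)/2) := by
  have hpow : (0:ℝ) < u ^ (-(1:ℝ)/2) := Real.rpow_pos_of_pos hu _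
  rcases le_or_gt 1 u with h1 | h1
  · have hlog : 0 ≤ Real.log u := Real.log_nonneg h1
    rw [abs_of_nonneg hlog]
    have := Real.log_le_sub_one_of_pos hu
    nlinarith
  · have hlog : Real.log u ≤ 0 := Real.log_nonpos hu.le h1.le
    rw [abs_of_nonpos hlog]
    have h2 : Real.log (u ^ (-(1:ℝ)/2)) = (-(1:ℝ)/2) * Real.log u :=
      Real.log_rpow hu _
    have h3 : Real.log (u ^ (-(1:ℝ)/2)) ≤ u ^ (-(1:ℝ)/2) - 1 :=
      Real.log_le_sub_one_of_pos hpow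
    nlinarith

/-- `t ↦ |t-z|^{-1/2}` is integrable on `[z-δ, z+δ]`. -/
lemma rpow_abs_integrable (z δ : ℝ) (hδ : 0 ≤ δ) :
    IntegrableOn (fun t : ℝ => |t - z| ^ (-(1:ℝ)/2)) (Set.Icc (z - δ) (z + δ)) volume := by
  have base : IntervalIntegrable (fun x : ℝ => x ^ (-(1:ℝ)/2)) volume 0 δ :=
    intervalIntegral.intervalIntegrable_rpow' (by norm_num)
  have h1 : IntegrableOn (fun x : ℝ => (x - z) ^ (-(1:ℝ)/2)) (Set.Ioc z (z + δ)) volume := by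
    have := (base.comp_sub_right z).1
    simpa [zero_add, add_comm] using this
  have h2 : IntegrableOn (fun x : ℝ => (z - x) ^ (-(1:ℝ)/2)) (Set.Ioc (z - δ) z) volume := by
    have := ((base.comp_sub_left z).symm).1
    simpa using this
  have hsub : Set.Icc (z - δ) (z + δ) ⊆ Set.Ioc (z - δ) z ∪ Set.Icc (z - δ) z
      ∪ Set.Ioc z (z + δ) := by
    intro t ht
    rcases le_or_gt t z with h | h
    · exact Or.inl (Or.inr ⟨ht.1, h⟩)
    · exact Or.inr ⟨h, ht.2⟩
  have hIccL : IntegrableOn (fun t : ℝ => |t - z| ^ (-(1:ℝ)/2)) (Set.Icc (z - δ) z) volume := by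
    rw [integrableOn_Icc_iff_integrableOn_Ioc]
    refine h2.congr_fun ?_ measurableSet_Ioc
    intro t ht
    show (z - t) ^ (-(1:ℝ)/2) = |t - z| ^ (-(1:ℝ)/2)
    rw [abs_sub_comm, abs_of_nonneg (by linarith [ht.2] : 0 ≤ z - t)]
  have hIccR : IntegrableOn (fun t : ℝ => |t - z| ^ (-(1:ℝ)/2)) (Set.Ioc z (z + δ)) volume := by
    refine h1.congr_fun ?_ measurableSet_Ioc
    intro t ht
    show (t - z) ^ (-(1:ℝ)/2) = |t - z| ^ (-(1:ℝ)/2)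
    rw [abs_of_nonneg (by linarith [ht.1] : 0 ≤ t - z)]
  refine IntegrableOn.mono_set ?_ hsub
  exact ((hIccL.mono_set Set.Ioc_subset_Icc_self).union hIccL).union hIccR

/-- `t ↦ |log |t-z||` is integrable on `[z-δ, z+δ]`. -/
lemma log_abs_integrable (z δ : ℝ) (hδ : 0 ≤ δ) :
    IntegrableOn (fun t : ℝ => |Real.log (|t - z|)|) (Set.Icc (z - δ) (z + δ)) volume := by
  have hmeas : Measurable fun t : ℝ => |Real.log (|t - z|)| :=
    (Real.measurable_log.comp ((measurable_id.sub_const z).abs)).abs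
  have hφ : IntegrableOn (fun t : ℝ => |t - z| + 2 * |t - z| ^ (-(1:ℝ)/2))
      (Set.Icc (z - δ) (z + δ)) volume := by
    refine Integrable.add ?_ ((rpow_abs_integrable z δ hδ).const_mul 2)
    exact (continuous_abs.comp (continuous_id.sub continuous_const)).continuousOn.integrableOn_Icc
  refine Integrable.mono' hφ (hmeas.aestronglyMeasurable.restrict) ?_
  have hz : ∀ᵐ t : ℝ ∂(volume.restrict (Set.Icc (z - δ) (z + δ))), t ≠ z := by
    refine ae_restrict_of_ae ?_
    rw [ae_iff]
    simpa using measure_singleton (z : ℝ)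
  filter_upwards [hz] with t ht
  have hpos : 0 < |t - z| := abs_pos.mpr (sub_ne_zero.mpr ht)
  simpa [abs_abs] using log_abs_le_aux hpos

/-- Near a transversal point, `|g t - g x| ≥ c |t - x|`. -/
lemma lower_bound {g : ℝ → ℝ} (hg : ContDiff ℝ 1 g) {x : ℝ} (hx' : deriv g x ≠ 0) :
    ∃ δ > 0, ∀ t ∈ Set.Icc (x - δ) (x + δ),
      |deriv g x| / 2 * |t - x| ≤ |g t - g x| := by
  have hc : 0 < |deriv g x| / 2 := by positivity
  have hcont : ContinuousAt (deriv g) x :=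
    (hg.continuous_deriv le_rfl).continuousAt
  obtain ⟨δ, hδpos, hδ⟩ := Metric.continuousAt_iff.mp hcont (|deriv g x| / 2) hc
  refine ⟨δ / 2, by positivity, ?_⟩
  have hbig : ∀ ξ ∈ Set.Icc (x - δ/2) (x + δ/2), |deriv g x| / 2 ≤ |deriv g ξ| := by
    intro ξ hξ
    have hdist : dist ξ x < δ := by
      rw [Real.dist_eq]
      have h1 := hξ.1; have h2 := hξ.2
      rw [abs_lt]; constructor <;> linarith
    have := hδ hdist
    rw [Real.dist_eq] at this
    calc |deriv g x| / 2 = |deriv g x| - |deriv g x| / 2 := by ring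
      _ ≤ |deriv g x| - |deriv g ξ - deriv g x| := by linarith
      _ ≤ |deriv g ξ| := by
          have := abs_sub_abs_le_abs_sub (deriv g x) (deriv g ξ)
          have h := abs_sub_comm (deriv g ξ) (deriv g x)
          linarith [abs_sub_abs_le_abs_sub (deriv g x) (deriv g ξ), h ▸ this]
  intro t ht
  have hdiff : ∀ y : ℝ, HasDerivAt g (deriv g y) y := fun y =>
    (hg.differentiable one_ne_zero).differentiableAt.hasDerivAt
  rcases lt_trichotomy t x with h | h | h
  · obtain ⟨ξ, hξ, hslope⟩ := exists_hasDerivAt_eq_slope g (deriv g) h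
      ((hg.continuous).continuousOn) (fun y _ => hdiff y)
    have hξmem : ξ ∈ Set.Icc (x - δ/2) (x + δ/2) := by
      constructor <;> [linarith [hξ.1, ht.1]; linarith [hξ.2]]
    have hne : x - t ≠ 0 := sub_ne_zero.mpr (ne_of_gt h)
    have h1 : g x - g t = deriv g ξ * (x - t) := by
      rw [hslope, div_mul_cancel₀ _ hne]
    have : |g t - g x| = |deriv g ξ| * |x - t| := by
      rw [abs_sub_comm, h1, abs_mul]
    rw [this, abs_sub_comm t x]
    exact mul_le_mul_of_nonneg_right (hbig ξ hξmem) (abs_nonneg _)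
  · simp [h]
  · obtain ⟨ξ, hξ, hslope⟩ := exists_hasDerivAt_eq_slope g (deriv g) h
      ((hg.continuous).continuousOn) (fun y _ => hdiff y)
    have hξmem : ξ ∈ Set.Icc (x - δ/2) (x + δ/2) := by
      constructor <;> [linarith [hξ.1]; linarith [hξ.2, ht.2]]
    have hne : t - x ≠ 0 := sub_ne_zero.mpr (ne_of_gt h)
    have h1 : g t - g x = deriv g ξ * (t - x) := by
      rw [hslope, div_mul_cancel₀ _ hne]
    have : |g t - g x| = |deriv g ξ| * |t - x| := by rw [h1, abs_mul]
    rw [this]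
    exact mul_le_mul_of_nonneg_right (hbig ξ hξmem) (abs_nonneg _)

/-- If `g : ℝ → ℝ` is `C¹`, 1-periodic, and all its zeros are transversal
(`g(t) = 0 → g′(t) ≠ 0`), then `g` has finitely many zeros in `[0,1)` and `t ↦ log|g(t)|`
is Lebesgue-integrable on `[0,1]`. -/
theorem log_abs_transversal_integrable (g : ℝ → ℝ) (hg : ContDiff ℝ 1 g)
    (hper : ∀ t, g (t + 1) = g t) (htr : ∀ t, g t = 0 → deriv g t ≠ 0) :
    ({t : ℝ | t ∈ Set.Ico (0:ℝ) 1 ∧ g t = 0}).Finite ∧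
      IntegrableOn (fun t => abs (Real.log (abs (g t)))) (Set.Icc (0:ℝ) 1) volume := by
  constructor
  · -- finiteness
    set Z : Set ℝ := Set.Icc (0:ℝ) 1 ∩ g ⁻¹' {0} with hZ
    have hZcompact : IsCompact Z :=
      isCompact_Icc.inter_right (isClosed_singleton.preimage hg.continuous)
    have hdisc : DiscreteTopology Z := by
      rw [discreteTopology_subtype_iff]
      intro x hx
      rw [Filter.inf_principal_eq_bot]
      obtain ⟨δ, hδpos, hbd⟩ := lower_bound hg (htr x hx.2)
      have hmem : Set.Ioo (x - δ) (x + δ) ∈ 𝓝[≠] x :=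
        mem_nhdsWithin_of_mem_nhds (Ioo_mem_nhds (by linarith) (by linarith))
      have hself : ({x}ᶜ : Set ℝ) ∈ 𝓝[≠] x := self_mem_nhdsWithin
      filter_upwards [hmem, hself] with t htI htne
      intro htZ
      have h1 := hbd t ⟨htI.1.le, htI.2.le⟩
      rw [hx.2, htZ.2, sub_zero] at h1
      simp only [abs_zero] at h1
      have hpos : 0 < |deriv g x| / 2 * |t - x| := by
        have : t ≠ x := htne
        have : 0 < |t - x| := abs_pos.mpr (sub_ne_zero.mpr this)
        have hd : 0 < |deriv g x| / 2 := by
          have := htr x hx.2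
          positivity
        positivity
      linarith
    have hZfin : Z.Finite := hZcompact.finite (isDiscrete_iff_discreteTopology.mpr hdisc)
    refine hZfin.subset ?_
    rintro t ⟨ht, hgt⟩
    exact ⟨⟨ht.1, ht.2.le⟩, hgt⟩
  · -- integrability
    have hloc : LocallyIntegrableOn (fun t => |Real.log (|g t|)|) (Set.Icc (0:ℝ) 1) volume := by
      intro x hx
      by_cases hgx : g x = 0
      · obtain ⟨δ, hδpos, hbd⟩ := lower_bound hg (htr x hgx)
        set c := |deriv g x| / 2 with hc
        have hcpos : 0 < c := by
          have := htr x hgx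
          positivity
        obtain ⟨M, hM⟩ := (isCompact_Icc (a := x - δ) (b := x + δ)).exists_bound_of_continuousOn
          hg.continuous.continuousOn
        set M' := max M 1 with hM'
        have hM'1 : (1:ℝ) ≤ M' := le_max_right _ _
        refine ⟨Set.Icc (x - δ) (x + δ),
          mem_nhdsWithin_of_mem_nhds (Icc_mem_nhds (by linarith) (by linarith)), ?_⟩
        have hmeas : Measurable fun t : ℝ => |Real.log (|g t|)| :=
          (Real.measurable_log.comp (hg.continuous.measurable.abs)).abs
        have hφ : IntegrableOn
            (fun t : ℝ => |Real.log c| + Real.log M' + |Real.log (|t - x|)|)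
            (Set.Icc (x - δ) (x + δ)) volume := by
          exact (integrableOn_const (by simp)).add
            (log_abs_integrable x δ hδpos.le)
        refine Integrable.mono' hφ (hmeas.aestronglyMeasurable.restrict) ?_
        have hz : ∀ᵐ t : ℝ ∂(volume.restrict (Set.Icc (x - δ) (x + δ))), t ≠ x := by
          refine ae_restrict_of_ae ?_
          rw [ae_iff]
          simpa using measure_singleton (x : ℝ)
        filter_upwards [hz, ae_restrict_mem measurableSet_Icc] with t htne htmem
        have htx : 0 < |t - x| := abs_pos.mpr (sub_ne_zero.mpr htne)
        have hlow : c * |t - x| ≤ |g t| := by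
          have := hbd t htmem
          rwa [hgx, sub_zero] at this
        have hu : 0 < |g t| := lt_of_lt_of_le (by positivity) hlow
        have hup : |g t| ≤ M' := le_trans (by simpa using hM t htmem) (le_max_left _ _)
        have hA : |Real.log (c * |t - x|)| ≤ |Real.log c| + |Real.log (|t - x|)| := by
          rw [Real.log_mul (ne_of_gt hcpos) (ne_of_gt htx)]
          exact abs_add_le _ _
        have hBnn : 0 ≤ Real.log M' := Real.log_nonneg hM'1
        have hup' : Real.log (|g t|) ≤ Real.log M' := Real.log_le_log hu hup
        have hlow' : Real.log (c * |t - x|) ≤ Real.log (|g t|) :=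
          Real.log_le_log (by positivity) hlow
        have h1 : -( |Real.log c| + |Real.log (|t - x|)|) ≤ Real.log (|g t|) := by
          have := neg_abs_le (Real.log (c * |t - x|))
          linarith [hA]
        have : |Real.log (|g t|)| ≤ |Real.log c| + Real.log M' + |Real.log (|t - x|)| := by
          rw [abs_le]
          constructor
          · linarith
          · have : Real.log (|g t|) ≤ Real.log M' := hup'
            have h2 : 0 ≤ |Real.log c| := abs_nonneg _
            have h3 : 0 ≤ |Real.log (|t - x|)| := abs_nonneg _
            linarith
        simpa using this
      · -- g x ≠ 0 : f is continuous near x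
        have hcont : ContinuousAt g x := hg.continuous.continuousAt
        have hopen : {t : ℝ | g t ≠ 0} ∈ 𝓝 x := by
          have : IsOpen {t : ℝ | g t ≠ 0} :=
            (isClosed_singleton.preimage hg.continuous).isOpen_compl
          exact this.mem_nhds hgx
        obtain ⟨ε, hεpos, hε⟩ := Metric.mem_nhds_iff.mp hopen
        refine ⟨Set.Icc (x - ε/2) (x + ε/2),
          mem_nhdsWithin_of_mem_nhds (Icc_mem_nhds (by linarith) (by linarith)), ?_⟩
        have hne : ∀ t ∈ Set.Icc (x - ε/2) (x + ε/2), g t ≠ 0 := by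
          intro t ht
          refine hε ?_
          rw [Metric.mem_ball, Real.dist_eq, abs_lt]
          constructor <;> [linarith [ht.1]; linarith [ht.2]]
        have hcontOn : ContinuousOn (fun t => |Real.log (|g t|)|)
            (Set.Icc (x - ε/2) (x + ε/2)) := by
          refine ContinuousOn.abs (ContinuousOn.log (hg.continuous.abs.continuousOn) ?_)
          intro t ht
          exact abs_ne_zero.mpr (hne t ht)
        exact hcontOn.integrableOn_Icc
    exact hloc.integrableOn_isCompact isCompact_Icc
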